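/- Let K be a totally real number field with ring of integers 𝒪 and totally positive integers 𝒪⁺. Let 𝔞 be a nonzero ideal of 𝒪, let d be a positive rational integer with d ∈ 𝔞, and set S = 𝒪⁺ ∖ ⋃_{j≥0} (𝔞·(d^j) ∖ (d^{j+1})). Then for every δ ∈ 𝒪⁺, the number of partitions of δ with parts in 𝒪⁺ ∖ 𝔞 equals the number of partitions of δ with parts in S in which each part appears at most d − 1 times. -/

import Mathlib

set_option synthInstance.maxHeartbeats 1000000
set_option maxHeartbeats 1000000

open scoped Classical

open NumberField

/-- `x ∈ 𝓞 K` is totally positive if every real embedding of `K` sends it to a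
positive real number. -/
def IsTotallyPositive (K : Type*) [Field K] [NumberField K] (x : 𝓞 K) : Prop :=
  ∀ φ : K →+* ℝ, 0 < φ (x : K)


lemma digit_lt {d : ℕ} (hd : 1 < d) (n j : ℕ) : (Nat.digits d n).getD j 0 < d := by
  rcases lt_or_ge j (Nat.digits d n).length with h | h
  · rw [List.getD_eq_getElem _ _ h]
    exact Nat.digits_lt_base hd (List.getElem_mem h)
  · rw [List.getD_eq_default _ _ h]
    omega

lemma sum_digits {d : ℕ} (hd : 1 < d) : ∀ (M n : ℕ), n < d ^ M →
    ∑ j ∈ Finset.range M, (Nat.digits d n).getD j 0 * d ^ j = n := by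
  intro M
  induction M with
  | zero => intro n hn; simp at hn ⊢; omega
  | succ M ih =>
    intro n hn
    rcases Nat.eq_zero_or_pos n with rfl | hpos
    · simp
    rw [Nat.digits_def' hd hpos]
    rw [Finset.sum_range_succ']
    have ht : n / d < d ^ M := by
      rw [Nat.div_lt_iff_lt_mul (by omega)]
      calc n < d ^ (M+1) := hn
        _ = d ^ M * d := by ring
    have := ih (n / d) ht
    simp only [List.getD_cons_succ, List.getD_cons_zero, pow_zero, mul_one, pow_succ]
    calc ∑ j ∈ Finset.range M, (Nat.digits d (n/d)).getD j 0 * (d ^ j * d) + n % d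
        = (∑ j ∈ Finset.range M, (Nat.digits d (n/d)).getD j 0 * d ^ j) * d + n % d := by
          rw [Finset.sum_mul]; simp [mul_assoc]
      _ = n / d * d + n % d := by rw [this]
      _ = n := Nat.div_add_mod' n d

lemma digits_sum_eq {d : ℕ} (hd : 1 < d) : ∀ (M : ℕ) (c : ℕ → ℕ), (∀ j, c j < d) → ∀ J,
    (Nat.digits d (∑ j ∈ Finset.range M, c j * d ^ j)).getD J 0 = if J < M then c J else 0 := by
  intro M
  induction M with
  | zero => intro c hc J; simp
  | succ M ih =>
    intro c hc J
    have hsplit : ∑ j ∈ Finset.range (M+1), c j * d ^ j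
        = c 0 + d * ∑ j ∈ Finset.range M, c (j+1) * d ^ j := by
      rw [Finset.sum_range_succ']
      rw [Finset.mul_sum]
      simp only [pow_succ, pow_zero, mul_one]
      rw [add_comm]
      congr 1
      exact Finset.sum_congr rfl fun x _ => by ring
    rw [hsplit]
    rcases Nat.eq_zero_or_pos (c 0 + d * ∑ j ∈ Finset.range M, c (j+1) * d ^ j) with h0 | hpos
    · have hc0 : c 0 = 0 := by omega
      have hrest : ∑ j ∈ Finset.range M, c (j+1) * d ^ j = 0 := by
        rcases Nat.mul_eq_zero.1 (by omega : d * ∑ j ∈ Finset.range M, c (j+1) * d ^ j = 0) with h | h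
        · omega
        · exact h
      rw [h0]
      simp only [Nat.digits_zero, List.getD_nil]
      rcases lt_or_ge J (M+1) with hJ | hJ
      · rw [if_pos hJ]
        rcases Nat.eq_zero_or_pos J with rfl | hJpos
        · omega
        · have := (Finset.sum_eq_zero_iff.1 hrest) (J-1) (Finset.mem_range.2 (by omega))
          have hd' : 0 < d ^ (J-1) := Nat.pow_pos (by omega)
          have hcj : c (J-1+1) = 0 := by
            rcases Nat.mul_eq_zero.1 this with h | h
            · exact h
            · omega
          have hJ1 : J - 1 + 1 = J := by omega
          rw [hJ1] at hcj
          omega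
      · rw [if_neg (by omega)]
    · rw [Nat.digits_def' hd hpos]
      have hmod : (c 0 + d * ∑ j ∈ Finset.range M, c (j+1) * d ^ j) % d = c 0 := by
        rw [Nat.add_mul_mod_self_left]
        exact Nat.mod_eq_of_lt (hc 0)
      have hdiv : (c 0 + d * ∑ j ∈ Finset.range M, c (j+1) * d ^ j) / d
          = ∑ j ∈ Finset.range M, c (j+1) * d ^ j := by
        rw [Nat.add_mul_div_left _ _ (by omega : 0 < d)]
        rw [Nat.div_eq_of_lt (hc 0)]
        omega
      rw [hmod, hdiv]
      cases J with
      | zero => simp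
      | succ J' =>
        simp only [List.getD_cons_succ]
        rw [ih (fun j => c (j+1)) (fun j => hc (j+1)) J']
        by_cases h : J' < M
        · rw [if_pos h, if_pos (by omega)]
        · rw [if_neg h, if_neg (by omega)]

lemma bind_finset_sum {α β ι : Type*} (s : Finset ι) (f : ι → Multiset α) (g : α → Multiset β) :
    ((∑ i ∈ s, f i).bind g) = ∑ i ∈ s, (f i).bind g := by
  induction s using Finset.cons_induction with
  | empty => simp
  | cons a t ha ih => rw [Finset.sum_cons, Finset.sum_cons, Multiset.add_bind, ih]

lemma finset_sum_replicate {α ι : Type*} (s : Finset ι) (g : ι → ℕ) (lam : α) :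
    (∑ i ∈ s, Multiset.replicate (g i) lam) = Multiset.replicate (∑ i ∈ s, g i) lam := by
  induction s using Finset.cons_induction with
  | empty => simp
  | cons a t ha ih => rw [Finset.sum_cons, Finset.sum_cons, ih, Multiset.replicate_add]

theorem glaisher_core {R : Type*} [CommRing R] (d : ℕ) (hd : 1 < d)
    (T S : Set R)
    (hinj : ∀ (j i : ℕ) (x y : R), x ∈ T → y ∈ T → (d:R)^j * x = (d:R)^i * y → j = i ∧ x = y)
    (hTS : ∀ (j : ℕ) (x : R), x ∈ T → (d:R)^j * x ∈ S)
    (hST : ∀ s ∈ S, ∃ (j : ℕ) (x : R), x ∈ T ∧ s = (d:R)^j * x)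
    (δ : R) :
    {m : Multiset R | (∀ x ∈ m, x ∈ T) ∧ m.sum = δ}.ncard =
    {m : Multiset R | (∀ x ∈ m, x ∈ S) ∧ (∀ x : R, m.count x ≤ d - 1) ∧ m.sum = δ}.ncard := by
  classical
  -- the decomposition function
  set Q : R → Prop := fun s => ∃ p : ℕ × R, p.2 ∈ T ∧ s = (d:R)^p.1 * p.2 with hQ
  set P : R → ℕ × R := fun s => if h : Q s then h.choose else (0, s) with hPdef
  have hP : ∀ s, Q s → (P s).2 ∈ T ∧ s = (d:R)^(P s).1 * (P s).2 := by
    intro s h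
    simp only [hPdef, dif_pos h]
    exact h.choose_spec
  have hQS : ∀ s ∈ S, Q s := by
    intro s hs
    obtain ⟨j, x, h1, h2⟩ := hST s hs
    exact ⟨(j, x), h1, h2⟩
  have hPinv : ∀ (j : ℕ) (x : R), x ∈ T → P ((d:R)^j * x) = (j, x) := by
    intro j x hx
    obtain ⟨h1, h2⟩ := hP ((d:R)^j * x) ⟨(j, x), hx, rfl⟩
    obtain ⟨hji, hxy⟩ := hinj _ j _ x h1 hx h2.symm
    exact Prod.ext hji hxy
  -- the two maps
  set Φ : Multiset R → Multiset R := fun m => ∑ lam ∈ m.toFinset,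
      ∑ j ∈ Finset.range (Nat.digits d (m.count lam)).length,
        (Nat.digits d (m.count lam)).getD j 0 • ({(d:R)^j * lam} : Multiset R) with hΦdef
  set Ψ : Multiset R → Multiset R := fun m =>
      m.bind fun s => Multiset.replicate (d ^ (P s).1) (P s).2 with hΨdef
  -- membership in Φ m
  have hΦmem : ∀ (m : Multiset R) (x : R), x ∈ Φ m →
      ∃ (j : ℕ) (lam : R), lam ∈ m ∧ x = (d:R)^j * lam := by
    intro m x hx
    simp only [hΦdef] at hx
    rw [Multiset.mem_sum] at hx
    obtain ⟨lam, hlam, hx⟩ := hx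
    rw [Multiset.mem_sum] at hx
    obtain ⟨j, _, hx⟩ := hx
    rw [Multiset.nsmul_singleton] at hx
    exact ⟨j, lam, Multiset.mem_toFinset.1 hlam, Multiset.eq_of_mem_replicate hx⟩
  -- count in Φ m
  have hΦcount : ∀ (m : Multiset R), (∀ x ∈ m, x ∈ T) → ∀ (J : ℕ) (μ : R), μ ∈ T →
      (Φ m).count ((d:R)^J * μ) = (Nat.digits d (m.count μ)).getD J 0 := by
    intro m hm J μ hμ
    simp only [hΦdef]
    rw [Multiset.count_sum']
    have hosum : ∀ lam ∈ m.toFinset, lam ≠ μ →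
        Multiset.count ((d:R)^J*μ) (∑ j ∈ Finset.range (Nat.digits d (m.count lam)).length,
          (Nat.digits d (m.count lam)).getD j 0 • ({(d:R)^j * lam} : Multiset R)) = 0 := by
      intro lam hlam hne
      rw [Multiset.count_sum']
      apply Finset.sum_eq_zero
      intro j _
      rw [Multiset.count_nsmul, Multiset.count_singleton, if_neg, mul_zero]
      intro he
      exact hne ((hinj J j μ lam hμ (hm lam (Multiset.mem_toFinset.1 hlam)) he).2).symm
    by_cases hμm : μ ∈ m.toFinset
    · rw [Finset.sum_eq_single_of_mem μ hμm (fun lam hl hne => hosum lam hl hne)]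
      rw [Multiset.count_sum']
      have : ∀ j ∈ Finset.range (Nat.digits d (m.count μ)).length,
          Multiset.count ((d:R)^J*μ) ((Nat.digits d (m.count μ)).getD j 0 • ({(d:R)^j * μ} : Multiset R))
          = if j = J then (Nat.digits d (m.count μ)).getD j 0 else 0 := by
        intro j _
        rw [Multiset.count_nsmul, Multiset.count_singleton]
        by_cases h : j = J
        · subst h; rw [if_pos rfl, if_pos rfl, mul_one]
        · rw [if_neg h, if_neg, mul_zero]
          intro he
          exact h (hinj j J μ μ hμ hμ (he ▸ rfl)).1
      rw [Finset.sum_congr rfl this, Finset.sum_ite_eq' (Finset.range _) J]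
      by_cases hJ : J ∈ Finset.range (Nat.digits d (m.count μ)).length
      · rw [if_pos hJ]
      · rw [if_neg hJ]
        rw [Finset.mem_range, not_lt] at hJ
        rw [List.getD_eq_default _ _ hJ]
    · rw [Finset.sum_eq_zero (fun lam hl => hosum lam hl (by rintro rfl; exact hμm hl))]
      rw [Multiset.count_eq_zero_of_notMem (fun h => hμm (Multiset.mem_toFinset.2 h))]
      simp
  -- sum of Φ m
  have hΦsum : ∀ m : Multiset R, (Φ m).sum = m.sum := by
    intro m
    simp only [hΦdef]
    rw [Multiset.sum_sum]
    have hterm : ∀ lam ∈ m.toFinset,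
        (∑ j ∈ Finset.range (Nat.digits d (m.count lam)).length,
          (Nat.digits d (m.count lam)).getD j 0 • ({(d:R)^j * lam} : Multiset R)).sum
        = ((m.count lam : ℕ) : R) * lam := by
      intro lam _
      rw [Multiset.sum_sum]
      have : ∀ j ∈ Finset.range (Nat.digits d (m.count lam)).length,
          ((Nat.digits d (m.count lam)).getD j 0 • ({(d:R)^j * lam} : Multiset R)).sum
          = (((Nat.digits d (m.count lam)).getD j 0 * d ^ j : ℕ) : R) * lam := by
        intro j _
        rw [Multiset.sum_nsmul, Multiset.sum_singleton]
        rw [nsmul_eq_mul]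
        push_cast
        ring
      rw [Finset.sum_congr rfl this, ← Finset.sum_mul, ← Nat.cast_sum]
      rw [sum_digits hd _ _ (Nat.lt_base_pow_length_digits hd)]
    rw [Finset.sum_congr rfl hterm]
    conv_rhs => rw [← Multiset.toFinset_sum_count_nsmul_eq m]
    rw [Multiset.sum_sum]
    apply Finset.sum_congr rfl
    intro lam _
    rw [Multiset.sum_nsmul, Multiset.sum_singleton, nsmul_eq_mul]
  -- Ψ : membership
  have hΨmem : ∀ (m : Multiset R), (∀ x ∈ m, x ∈ S) → ∀ y ∈ Ψ m, y ∈ T := by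
    intro m hm y hy
    simp only [hΨdef] at hy
    obtain ⟨s, hs, hy⟩ := Multiset.mem_bind.1 hy
    rw [Multiset.eq_of_mem_replicate hy]
    exact (hP s (hQS s (hm s hs))).1
  -- Ψ : sum
  have hΨsum : ∀ (m : Multiset R), (∀ x ∈ m, x ∈ S) → (Ψ m).sum = m.sum := by
    intro m hm
    simp only [hΨdef, Multiset.sum_bind]
    congr 1
    rw [show (m.map fun s => (Multiset.replicate (d ^ (P s).1) (P s).2).sum) = m.map id from ?_,
      Multiset.map_id]
    apply Multiset.map_congr rfl
    intro s hs
    rw [Multiset.sum_replicate, nsmul_eq_mul, id]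
    push_cast
    exact ((hP s (hQS s (hm s hs))).2).symm
  -- Ψ of Φ
  have hΨΦ : ∀ (m : Multiset R), (∀ x ∈ m, x ∈ T) → Ψ (Φ m) = m := by
    intro m hm
    simp only [hΦdef, hΨdef]
    rw [bind_finset_sum]
    have hterm : ∀ lam ∈ m.toFinset,
        ((∑ j ∈ Finset.range (Nat.digits d (m.count lam)).length,
          (Nat.digits d (m.count lam)).getD j 0 • ({(d:R)^j * lam} : Multiset R)).bind
            fun s => Multiset.replicate (d ^ (P s).1) (P s).2)
        = m.count lam • ({lam} : Multiset R) := by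
      intro lam hlam
      have hlamT : lam ∈ T := hm lam (Multiset.mem_toFinset.1 hlam)
      rw [bind_finset_sum]
      have : ∀ j ∈ Finset.range (Nat.digits d (m.count lam)).length,
          (((Nat.digits d (m.count lam)).getD j 0 • ({(d:R)^j * lam} : Multiset R)).bind
            fun s => Multiset.replicate (d ^ (P s).1) (P s).2)
          = Multiset.replicate ((Nat.digits d (m.count lam)).getD j 0 * d ^ j) lam := by
        intro j _
        have hbrep : ∀ (n : ℕ) (x : R), (Multiset.replicate n x).bind
            (fun s => Multiset.replicate (d ^ (P s).1) (P s).2)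
            = n • Multiset.replicate (d ^ (P x).1) (P x).2 := by
          intro n x
          induction n with
          | zero => simp
          | succ n ih =>
            rw [Multiset.replicate_succ, Multiset.cons_bind, ih, succ_nsmul, add_comm]
        rw [Multiset.nsmul_singleton, hbrep, hPinv j lam hlamT]
        rw [Multiset.nsmul_replicate]
      rw [Finset.sum_congr rfl this]
      rw [finset_sum_replicate, sum_digits hd _ _ (Nat.lt_base_pow_length_digits hd), Multiset.nsmul_singleton]
    rw [Finset.sum_congr rfl hterm, Multiset.toFinset_sum_count_nsmul_eq]
  -- count in Ψ
  have hΨcount : ∀ (m : Multiset R), (∀ x ∈ m, x ∈ S) → ∀ (M : ℕ),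
      (∀ s ∈ m, (P s).1 < M) → ∀ μ ∈ T,
      (Ψ m).count μ = ∑ j ∈ Finset.range M, (m.count ((d:R)^j * μ)) * d ^ j := by
    intro m hm M hM μ hμ
    simp only [hΨdef, Multiset.count_bind]
    rw [Finset.sum_multiset_map_count]
    have hrhs : ∀ j ∈ Finset.range M, (m.count ((d:R)^j * μ)) * d ^ j
        = ∑ s ∈ m.toFinset, (if s = (d:R)^j * μ then m.count s * d ^ j else 0) := by
      intro j _
      rw [Finset.sum_ite_eq' m.toFinset ((d:R)^j * μ) (fun s => m.count s * d ^ j)]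
      by_cases h : (d:R)^j * μ ∈ m.toFinset
      · rw [if_pos h]
      · rw [if_neg h, Multiset.count_eq_zero_of_notMem (fun hc => h (Multiset.mem_toFinset.2 hc)),
          zero_mul]
    rw [Finset.sum_congr rfl hrhs, Finset.sum_comm]
    apply Finset.sum_congr rfl
    intro s hs
    have hsS : s ∈ S := hm s (Multiset.mem_toFinset.1 hs)
    obtain ⟨hsT, hseq⟩ := hP s (hQS s hsS)
    have hkey : ∀ j, s = (d:R)^j * μ ↔ (j = (P s).1 ∧ μ = (P s).2) := by
      intro j
      constructor
      · intro h
        have := hPinv j μ hμ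
        rw [← h] at this
        exact ⟨(congrArg Prod.fst this).symm, (congrArg Prod.snd this).symm⟩
      · rintro ⟨rfl, rfl⟩
        exact hseq
    rw [Finset.sum_eq_single ((P s).1)
      (fun j _ hj => if_neg (fun h => hj ((hkey j).1 h).1))
      (fun h => absurd (Finset.mem_range.2 (hM s (Multiset.mem_toFinset.1 hs))) h)]
    rw [Multiset.count_replicate, smul_eq_mul]
    by_cases h : μ = (P s).2
    · rw [if_pos h.symm, if_pos ((hkey _).2 ⟨rfl, h⟩)]
    · rw [if_neg (fun he => h he.symm), if_neg (fun hc => h ((hkey _).1 hc).2), mul_zero]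
  -- Φ of Ψ
  have hΦΨ : ∀ (m : Multiset R), (∀ x ∈ m, x ∈ S) → (∀ x : R, m.count x ≤ d - 1) →
      Φ (Ψ m) = m := by
    intro m hm hcnt
    have hΨT : ∀ y ∈ Ψ m, y ∈ T := hΨmem m hm
    set M : ℕ := (m.toFinset.sup fun s => (P s).1) + 1 with hMdef
    have hM : ∀ s ∈ m, (P s).1 < M := by
      intro s hs
      have := Finset.le_sup (f := fun s => (P s).1) (Multiset.mem_toFinset.2 hs)
      omega
    ext x
    by_cases hx : ∃ p : ℕ × R, p.2 ∈ T ∧ x = (d:R)^p.1 * p.2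
    · obtain ⟨⟨J, μ⟩, hμT, rfl⟩ := hx
      rw [hΦcount (Ψ m) hΨT J μ hμT]
      rw [hΨcount m hm M hM μ hμT]
      have hcltd : ∀ j, m.count ((d:R)^j * μ) < d := by
        intro j
        have := hcnt ((d:R)^j * μ)
        omega
      rw [digits_sum_eq hd M (fun j => m.count ((d:R)^j * μ)) hcltd J]
      by_cases hJ : J < M
      · rw [if_pos hJ]
      · rw [if_neg hJ]
        by_cases hmem : (d:R)^J * μ ∈ m
        · exfalso
          have h2 := hM _ hmem
          rw [hPinv J μ hμT] at h2
          exact hJ h2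
        · rw [Multiset.count_eq_zero_of_notMem hmem]
    · have h1 : (d:R)^0 * x ∉ Φ (Ψ m) := by
        intro h
        obtain ⟨j, lam, hlam, heq⟩ := hΦmem (Ψ m) _ h
        exact hx ⟨(j, lam), hΨT lam hlam, by rw [← heq, pow_zero, one_mul]⟩
      rw [pow_zero, one_mul] at h1
      rw [Multiset.count_eq_zero_of_notMem h1]
      rw [Multiset.count_eq_zero_of_notMem (fun hmem => hx ⟨((P x).1, (P x).2),
        (hP x (hQS x (hm x hmem))).1, (hP x (hQS x (hm x hmem))).2⟩)]
  -- assembling the bijection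
  rw [← Nat.card_coe_set_eq, ← Nat.card_coe_set_eq]
  apply Nat.card_congr
  refine
    { toFun := fun x => ⟨Φ x.1, ?_, ?_, ?_⟩
      invFun := fun y => ⟨Ψ y.1, ?_, ?_⟩
      left_inv := fun x => Subtype.ext (hΨΦ x.1 x.2.1)
      right_inv := fun y => Subtype.ext (hΦΨ y.1 y.2.1 y.2.2.1) }
  · intro z hz
    obtain ⟨j, lam, hlam, rfl⟩ := hΦmem x.1 z hz
    exact hTS j lam (x.2.1 lam hlam)
  · intro z
    by_cases hz : z ∈ Φ x.1
    · obtain ⟨j, lam, hlam, rfl⟩ := hΦmem x.1 z hz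
      rw [hΦcount x.1 x.2.1 j lam (x.2.1 lam hlam)]
      have := digit_lt hd (x.1.count lam) j
      omega
    · rw [Multiset.count_eq_zero_of_notMem hz]
      omega
  · rw [hΦsum]; exact x.2.2
  · exact fun z hz => hΨmem y.1 y.2.1 z hz
  · rw [hΨsum y.1 y.2.1]; exact y.2.2.2

/-- for a nonzero ideal `𝔞` of `𝓞 K` and a positive rational integer `d ∈ 𝔞`,
set `S = 𝒪⁺ \ ⋃_{j ≥ 0} (𝔞·(dʲ) \ (d^{j+1}))`.  Then the number of partitions of a totally
positive `δ` with parts in `𝒪⁺ \ 𝔞` equals the number of partitions of `δ` with parts in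
`S`, each part repeated at most `d − 1` times. -/
theorem ideal_partition_theorem
    (K : Type*) [Field K] [NumberField K]
    (hTR : ∀ φ : K →+* ℂ, ∀ x : K, (φ x).im = 0)
    (𝔞 : Ideal (𝓞 K)) (h𝔞 : 𝔞 ≠ ⊥)
    (d : ℕ) (hd : 0 < d) (hda : (d : 𝓞 K) ∈ 𝔞)
    (S : Set (𝓞 K))
    (hS : S = {x : 𝓞 K | IsTotallyPositive K x} \
      ⋃ j : ℕ, {x : 𝓞 K |
        x ∈ 𝔞 * Ideal.span {(d : 𝓞 K) ^ j} ∧ x ∉ Ideal.span {(d : 𝓞 K) ^ (j + 1)}})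
    (δ : 𝓞 K) (hδ : IsTotallyPositive K δ) :
    {m : Multiset (𝓞 K) |
        (∀ x ∈ m, IsTotallyPositive K x ∧ x ∉ 𝔞) ∧ m.sum = δ}.ncard =
    {m : Multiset (𝓞 K) |
        (∀ x ∈ m, x ∈ S) ∧ (∀ x : 𝓞 K, m.count x ≤ d - 1) ∧ m.sum = δ}.ncard := by
  classical
  rcases eq_or_lt_of_le (Nat.one_le_iff_ne_zero.2 hd.ne') with hd1 | hd2
  · -- d = 1
    have hd1' : d = 1 := hd1.symm
    subst hd1'
    have h𝔞top : 𝔞 = ⊤ := Ideal.eq_top_iff_one 𝔞 |>.2 (by simpa using hda)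
    subst h𝔞top
    congr 1
    ext m
    simp only [Set.mem_setOf_eq]
    constructor
    · rintro ⟨h1, h2⟩
      have hm0 : m = 0 := Multiset.eq_zero_of_forall_notMem
        (fun x hx => (h1 x hx).2 Submodule.mem_top)
      subst hm0
      exact ⟨fun x hx => absurd hx (Multiset.notMem_zero x), fun x => by simp, h2⟩
    · rintro ⟨h1, h2, h3⟩
      have hm0 : m = 0 := by
        ext x
        have := h2 x
        simp only [Multiset.count_zero]
        omega
      subst hm0
      exact ⟨fun x hx => absurd hx (Multiset.notMem_zero x), h3⟩
  · -- d ≥ 2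
    -- a real embedding of K
    obtain ⟨ψ⟩ : Nonempty (K →+* ℂ) := inferInstance
    let φ₀ : K →+* ℝ :=
      { toFun := fun x => (ψ x).re
        map_one' := by simp
        map_mul' := fun x y => by
          have hx := hTR ψ x
          have hy := hTR ψ y
          show (ψ (x*y)).re = (ψ x).re * (ψ y).re
          rw [map_mul, Complex.mul_re, hx, hy]
          ring
        map_zero' := by simp
        map_add' := fun x y => by
          show (ψ (x+y)).re = (ψ x).re + (ψ y).re
          rw [map_add, Complex.add_re] }
    have hd0 : (d : 𝓞 K) ≠ 0 := Nat.cast_ne_zero.2 (by omega)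
    have hnonunit : ¬ IsUnit ((d : 𝓞 K)) := by
      intro h
      rw [NumberField.isUnit_iff_norm, RingOfIntegers.coe_norm] at h
      have hcast : ((d : 𝓞 K) : K) = algebraMap ℚ K (d : ℚ) := by push_cast; rfl
      rw [hcast, Algebra.norm_algebraMap] at h
      have hn : 0 < Module.finrank ℚ K := Module.finrank_pos
      have h2 : (1:ℚ) < (d:ℚ) ^ Module.finrank ℚ K := by
        apply one_lt_pow₀ ?_ hn.ne'
        exact_mod_cast hd2
      rw [abs_of_pos (by positivity)] at h
      linarith
    set T : Set (𝓞 K) := {x : 𝓞 K | IsTotallyPositive K x ∧ x ∉ 𝔞} with hT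
    -- injectivity
    have hkey : ∀ (j i : ℕ) (x y : 𝓞 K), x ∈ T → y ∈ T → j ≤ i →
        ((d:𝓞 K))^j * x = ((d:𝓞 K))^i * y → j = i ∧ x = y := by
      intro j i x y hx hy hji heq
      have hpow : ((d:𝓞 K))^i = ((d:𝓞 K))^j * ((d:𝓞 K))^(i-j) := by
        rw [← pow_add]
        congr 1
        omega
      rw [hpow, mul_assoc] at heq
      have hxy : x = ((d:𝓞 K))^(i-j) * y := mul_left_cancel₀ (pow_ne_zero j hd0) heq
      rcases Nat.eq_or_lt_of_le hji with rfl | hlt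
      · simp only [Nat.sub_self, pow_zero, one_mul] at hxy
        exact ⟨rfl, hxy⟩
      · exfalso
        have : x ∈ 𝔞 := by
          have : x = (d:𝓞 K) * (((d:𝓞 K))^(i-j-1) * y) := by
            rw [hxy, ← mul_assoc, ← pow_succ']
            congr 2
            omega
          rw [this]
          exact Ideal.mul_mem_right _ _ hda
        exact hx.2 this
    have hinj : ∀ (j i : ℕ) (x y : 𝓞 K), x ∈ T → y ∈ T →
        ((d:𝓞 K))^j * x = ((d:𝓞 K))^i * y → j = i ∧ x = y := by
      intro j i x y hx hy heq
      rcases le_total j i with h | h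
      · exact hkey j i x y hx hy h heq
      · obtain ⟨h1, h2⟩ := hkey i j y x hy hx h heq.symm
        exact ⟨h1.symm, h2.symm⟩
    -- T maps into S
    have hTS : ∀ (j : ℕ) (x : 𝓞 K), x ∈ T → ((d:𝓞 K))^j * x ∈ S := by
      intro j x hx
      rw [hS]
      refine ⟨?_, ?_⟩
      · intro φ
        have hcast : ((((d:𝓞 K))^j * x : 𝓞 K) : K) = ((d:K))^j * (x:K) := by push_cast; ring
        rw [hcast, map_mul, map_pow, map_natCast]
        have := hx.1 φ
        positivity
      · intro hmem
        rw [Set.mem_iUnion] at hmem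
        obtain ⟨i, h1, h2⟩ := hmem
        rcases lt_or_ge i j with hij | hij
        · apply h2
          rw [Ideal.mem_span_singleton]
          exact ⟨((d:𝓞 K))^(j-i-1) * x, by rw [← mul_assoc, ← pow_add]; congr 2; omega⟩
        · obtain ⟨z, hz𝔞, hz⟩ := Ideal.mem_mul_span_singleton.1 h1
          have hzx : z * ((d:𝓞 K))^(i-j) = x := by
            apply mul_left_cancel₀ (pow_ne_zero j hd0)
            calc ((d:𝓞 K))^j * (z * ((d:𝓞 K))^(i-j)) = z * ((d:𝓞 K))^i := by
                  rw [← mul_assoc, mul_comm _ z, mul_assoc, ← pow_add]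
                  congr 2
                  omega
              _ = ((d:𝓞 K))^j * x := hz
          exact hx.2 (hzx ▸ Ideal.mul_mem_right _ _ hz𝔞)
    -- S decomposes over T
    have hST : ∀ s ∈ S, ∃ (j : ℕ) (x : 𝓞 K), x ∈ T ∧ s = ((d:𝓞 K))^j * x := by
      intro s hs
      rw [hS] at hs
      obtain ⟨hsTP, hsU⟩ := hs
      rw [Set.mem_setOf_eq] at hsTP
      have hs0 : s ≠ 0 := by
        intro h
        have := hsTP φ₀
        rw [h] at this
        simp at this
      obtain ⟨n, a, hnda, hsna⟩ := WfDvdMonoid.max_power_factor' hs0 hnonunit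
      refine ⟨n, a, ⟨?_, ?_⟩, hsna⟩
      · -- a totally positive
        intro φ
        have ha0 : (a : K) ≠ 0 := by
          intro h
          apply hs0
          rw [hsna]
          have : a = 0 := by exact_mod_cast h
          rw [this, mul_zero]
        have hφs := hsTP φ
        have hcast : ((s : 𝓞 K) : K) = ((d:K))^n * (a:K) := by
          rw [hsna]; push_cast; ring
        rw [hcast, map_mul, map_pow, map_natCast] at hφs
        have hdn : (0:ℝ) < (d:ℝ)^n := by positivity
        nlinarith
      · -- a ∉ 𝔞
        intro ha𝔞
        apply hsU
        rw [Set.mem_iUnion]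
        refine ⟨n, ?_, ?_⟩
        · rw [hsna, mul_comm (((d:𝓞 K))^n) a]
          exact Ideal.mul_mem_mul ha𝔞 (Ideal.mem_span_singleton_self _)
        · rw [Ideal.mem_span_singleton]
          intro hdvd
          apply hnda
          rw [hsna, pow_succ] at hdvd
          exact (mul_dvd_mul_iff_left (pow_ne_zero n hd0)).1 hdvd
    have := glaisher_core d hd2 T S hinj hTS hST δ
    convert this using 2
    rfl
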